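/- For any g₀ ∈ Sp₂(H) and v₀ ∈ sp₂(H), the curve α(t) = g₀ e^{t v₀*} e^{t(v₀ - v₀*)} lies entirely in Sp₂(H). -/

import Mathlib

set_option synthInstance.maxHeartbeats 2000000
set_option maxHeartbeats 1000000


open scoped RealInnerProductSpace
open ContinuousLinearMap

noncomputable section

variable {ι H : Type*} [NormedAddCommGroup H] [InnerProductSpace ℝ H] [CompleteSpace H]

/-- `x` is a Hilbert-Schmidt operator (with respect to the Hilbert basis `b`). -/
def IsHS (b : HilbertBasis ι ℝ H) (x : H →L[ℝ] H) : Prop :=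
  Summable fun i => ‖x (b i)‖ ^ 2

/-- The Hilbert-Schmidt norm `‖x‖₂`. -/
def hsNorm (b : HilbertBasis ι ℝ H) (x : H →L[ℝ] H) : ℝ :=
  Real.sqrt (∑' i, ‖x (b i)‖ ^ 2)

/-- The trace inner product `⟨x, y⟩ = Tr (y* x)`. -/
def hsInner (b : HilbertBasis ι ℝ H) (x y : H →L[ℝ] H) : ℝ :=
  ∑' i, ⟪x (b i), y (b i)⟫

/-- `J` is a complex structure: `J² = -1` and `J* = -J`. -/
def IsCplxStruct (J : H →L[ℝ] H) : Prop :=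
  J * J = -1 ∧ star J = -J

/-- The symplectic group `Sp(H)`. -/
def Sp (J : H →L[ℝ] H) : Set (H →L[ℝ] H) :=
  {g | IsUnit g ∧ star g * J * g = J}

/-- The restricted symplectic group `Sp₂(H)`. -/
def Sp2 (b : HilbertBasis ι ℝ H) (J : H →L[ℝ] H) : Set (H →L[ℝ] H) :=
  {g | g ∈ Sp J ∧ IsHS b (g - 1)}

/-- The Banach-Lie algebra `sp₂(H) = {x ∈ B₂(H) : xJ = -Jx*}`. -/
def sp2 (b : HilbertBasis ι ℝ H) (J : H →L[ℝ] H) : Set (H →L[ℝ] H) :=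
  {x | IsHS b x ∧ x * J = -(J * star x)}

/-- The Hermitian part of `sp₂(H)`. -/
def sp2h (b : HilbertBasis ι ℝ H) (J : H →L[ℝ] H) : Set (H →L[ℝ] H) :=
  {x ∈ sp2 b J | IsSelfAdjoint x}

/-- The anti-Hermitian part of `sp₂(H)`. -/
def sp2ah (b : HilbertBasis ι ℝ H) (J : H →L[ℝ] H) : Set (H →L[ℝ] H) :=
  {x ∈ sp2 b J | star x = -x}

/-- The positive part `Sp₂⁺(H)` of the restricted symplectic group. -/
def Sp2pos (b : HilbertBasis ι ℝ H) (J : H →L[ℝ] H) : Set (H →L[ℝ] H) :=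
  {g ∈ Sp2 b J | g.IsPositive}

/-- The restricted unitary group `U₂(H_J)` of unitaries commuting with `J` which are
Hilbert-Schmidt perturbations of the identity. -/
def U2J (b : HilbertBasis ι ℝ H) (J : H →L[ℝ] H) : Set (H →L[ℝ] H) :=
  {u | star u * u = 1 ∧ u * star u = 1 ∧ u * J = J * u ∧ IsHS b (u - 1)}

open scoped Classical in
/-- The positive square root `a^{1/2}` of a positive operator (junk value otherwise). -/
def psqrt (a : H →L[ℝ] H) : H →L[ℝ] H :=
  if h : ∃ s : H →L[ℝ] H, s.IsPositive ∧ s * s = a then h.choose else 0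

/-- A piecewise smooth curve parametrized on `[0,1]`. -/
def PiecewiseSmooth (α : ℝ → (H →L[ℝ] H)) : Prop :=
  ContinuousOn α (Set.Icc 0 1) ∧ ∃ n : ℕ, ∃ t : Fin (n + 1) → ℝ,
    StrictMono t ∧ t 0 = 0 ∧ t (Fin.last n) = 1 ∧
    ∀ i : Fin n, ContDiffOn ℝ 1 α (Set.Icc (t i.castSucc) (t i.succ))

/-- Length of a curve with respect to a metric `F` on tangent vectors. -/
def lengthWith (F : (H →L[ℝ] H) → (H →L[ℝ] H) → ℝ) (α : ℝ → (H →L[ℝ] H)) : ℝ :=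
  ∫ t in (0:ℝ)..1, F (α t) (deriv α t)

/-- Piecewise smooth curves inside `S` joining `p` to `q`. -/
def pathsIn (S : Set (H →L[ℝ] H)) (p q : H →L[ℝ] H) : Set (ℝ → (H →L[ℝ] H)) :=
  {α | PiecewiseSmooth α ∧ (∀ t ∈ Set.Icc (0:ℝ) 1, α t ∈ S) ∧ α 0 = p ∧ α 1 = q}

/-- The geodesic distance in `S` associated to the metric `F`. -/
def gdist (S : Set (H →L[ℝ] H)) (F : (H →L[ℝ] H) → (H →L[ℝ] H) → ℝ)
    (p q : H →L[ℝ] H) : ℝ :=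
  sInf (lengthWith F '' pathsIn S p q)

/-- The left invariant metric `I(g,v) = ‖g⁻¹ v‖₂`. -/
def leftMet (b : HilbertBasis ι ℝ H) : (H →L[ℝ] H) → (H →L[ℝ] H) → ℝ :=
  fun g v => hsNorm b (Ring.inverse g * v)

/-- The metric of positive operators `𝔭(a,x) = ‖a^{-1/2} x a^{-1/2}‖₂`. -/
def posMet (b : HilbertBasis ι ℝ H) : (H →L[ℝ] H) → (H →L[ℝ] H) → ℝ :=
  fun a x => hsNorm b (Ring.inverse (psqrt a) * x * Ring.inverse (psqrt a))

/-- The ambient metric `𝔭_amb(g,x) = ‖x‖₂`. -/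
def ambMet (b : HilbertBasis ι ℝ H) : (H →L[ℝ] H) → (H →L[ℝ] H) → ℝ :=
  fun _ x => hsNorm b x



section Helpers

variable {b : HilbertBasis ι ℝ H}

private lemma parseval (b : HilbertBasis ι ℝ H) (v : H) :
    HasSum (fun i => ⟪v, b i⟫ ^ 2) (‖v‖ ^ 2) := by
  have h := b.hasSum_inner_mul_inner v v
  rw [real_inner_self_eq_norm_sq] at h
  have e : (fun i => ⟪v, b i⟫ ^ 2) = fun i => ⟪v, b i⟫ * ⟪b i, v⟫ := by
    funext i
    rw [sq, real_inner_comm]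
  rw [e]; exact h

private lemma IsHS.star_mem {x : H →L[ℝ] H} (hx : IsHS b x) : IsHS b (star x) := by
  have key : Summable (fun p : ι × ι => ⟪x (b p.1), b p.2⟫ ^ 2) := by
    rw [summable_prod_of_nonneg (fun p => sq_nonneg _)]
    refine ⟨fun i => (parseval b (x (b i))).summable, ?_⟩
    have : (fun i => ∑' j, ⟪x (b i), b j⟫ ^ 2) = fun i => ‖x (b i)‖ ^ 2 := by
      funext i; exact (parseval b (x (b i))).tsum_eq
    rw [this]; exact hx
  have key2 : Summable (fun p : ι × ι => ⟪x (b p.2), b p.1⟫ ^ 2) := key.prod_symm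
  have hcols : Summable fun j => ∑' i, ⟪x (b i), b j⟫ ^ 2 :=
    ((summable_prod_of_nonneg (fun p => sq_nonneg _)).mp key2).2
  have heq : (fun j => ‖(star x) (b j)‖ ^ 2) = fun j => ∑' i, ⟪x (b i), b j⟫ ^ 2 := by
    funext j
    rw [← (parseval b ((star x) (b j))).tsum_eq]
    congr 1; funext i
    rw [ContinuousLinearMap.star_eq_adjoint, ContinuousLinearMap.adjoint_inner_left,
      real_inner_comm]
  unfold IsHS
  rw [heq]
  exact hcols

private lemma IsHS.mul_left' (a : H →L[ℝ] H) {x : H →L[ℝ] H} (hx : IsHS b x) :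
    IsHS b (a * x) := by
  refine Summable.of_nonneg_of_le (fun i => sq_nonneg _) (fun i => ?_) (hx.mul_left (‖a‖ ^ 2))
  rw [← mul_pow]
  have h1 : ‖(a * x) (b i)‖ ≤ ‖a‖ * ‖x (b i)‖ := by
    rw [ContinuousLinearMap.mul_apply]; exact a.le_opNorm _
  exact pow_le_pow_left₀ (norm_nonneg _) h1 2

private lemma IsHS.add' {x y : H →L[ℝ] H} (hx : IsHS b x) (hy : IsHS b y) :
    IsHS b (x + y) := by
  refine Summable.of_nonneg_of_le (fun i => sq_nonneg _) (fun i => ?_) ((hx.add hy).mul_left 2)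
  have h1 : ‖(x + y) (b i)‖ ≤ ‖x (b i)‖ + ‖y (b i)‖ := by
    rw [ContinuousLinearMap.add_apply]; exact norm_add_le _ _
  have h2 : ‖(x + y) (b i)‖ ^ 2 ≤ (‖x (b i)‖ + ‖y (b i)‖) ^ 2 :=
    pow_le_pow_left₀ (norm_nonneg _) h1 2
  nlinarith [sq_nonneg (‖x (b i)‖ - ‖y (b i)‖)]

private lemma IsHS.neg' {x : H →L[ℝ] H} (hx : IsHS b x) : IsHS b (-x) := by
  unfold IsHS at hx ⊢
  simpa only [ContinuousLinearMap.neg_apply, norm_neg] using hx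

private lemma IsHS.sub' {x y : H →L[ℝ] H} (hx : IsHS b x) (hy : IsHS b y) :
    IsHS b (x - y) := by
  rw [sub_eq_add_neg]; exact hx.add' hy.neg'

private lemma IsHS.smul' (t : ℝ) {x : H →L[ℝ] H} (hx : IsHS b x) : IsHS b (t • x) := by
  unfold IsHS at hx ⊢
  simp only [ContinuousLinearMap.smul_apply, norm_smul, mul_pow]
  exact hx.mul_left _

private lemma exp_sub_one_factor (x : H →L[ℝ] H) :
    ∃ c : H →L[ℝ] H, NormedSpace.exp x = 1 + c * x := by
  refine ⟨∑' n : ℕ, (((n+1).factorial : ℝ))⁻¹ • x ^ n, ?_⟩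
  have hs : Summable fun n : ℕ => (((n+1).factorial : ℝ))⁻¹ • x ^ n := by
    refine Summable.of_norm_bounded (Real.summable_pow_div_factorial ‖x‖) fun n => ?_
    refine le_trans (norm_smul_le ((((n+1).factorial : ℝ))⁻¹) (x ^ n)) ?_
    have h1 : ‖(((n+1).factorial : ℝ))⁻¹‖ ≤ ((n.factorial : ℝ))⁻¹ := by
      rw [Real.norm_eq_abs, abs_of_nonneg (by positivity)]
      refine inv_anti₀ (by positivity) ?_
      exact_mod_cast Nat.factorial_le (Nat.le_succ n)
    have h2 : ‖x ^ n‖ ≤ ‖x‖ ^ n := by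
      cases n with
      | zero => rw [pow_zero, pow_zero]; exact ContinuousLinearMap.norm_id_le (𝕜 := ℝ) (E := H)
      | succ m => exact norm_pow_le' x (Nat.succ_pos m)
    calc ‖(((n+1).factorial : ℝ))⁻¹‖ * ‖x ^ n‖ ≤ ((n.factorial : ℝ))⁻¹ * ‖x‖ ^ n := by
          exact mul_le_mul h1 h2 (norm_nonneg _) (by positivity)
      _ = ‖x‖ ^ n / n.factorial := by rw [div_eq_mul_inv, mul_comm]
  have h2 : Summable fun n : ℕ => ((n.factorial : ℝ)⁻¹) • x ^ n := NormedSpace.expSeries_summable' x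
  have hexp : NormedSpace.exp x = ∑' n : ℕ, ((n.factorial : ℝ))⁻¹ • x ^ n := by
    rw [NormedSpace.exp_eq_tsum ℝ]
  rw [hexp, h2.tsum_eq_zero_add]
  simp only [Nat.factorial_zero, Nat.cast_one, inv_one, pow_zero, one_smul]
  congr 1
  rw [← hs.tsum_mul_right x]
  exact tsum_congr fun n => by rw [smul_mul_assoc, ← pow_succ]

private lemma decomp_aux {A : Type*} [Ring A] (g c₁ c₂ x₁ x₂ : A) :
    g * (1 + c₁ * x₁) * (1 + c₂ * x₂) - 1
      = (g * (1 + c₁ * x₁) * c₂) * x₂ + ((g * c₁) * x₁ + (g - 1)) := by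
  noncomm_ring

private lemma sp_rel_mul {J a c : H →L[ℝ] H} (ha : star a * J * a = J)
    (hc : star c * J * c = J) : star (a * c) * J * (a * c) = J := by
  have h : star (a * c) * J * (a * c) = star c * (star a * J * a) * c := by
    simp only [star_mul, mul_assoc]
  rw [h, ha, hc]

end Helpers

/-- the geodesic `α(t) = g₀ e^{t v₀*} e^{t(v₀ - v₀*)}` stays in `Sp₂(H)`. -/
theorem geodesic_stays_in_Sp2 (b : HilbertBasis ι ℝ H) (J : H →L[ℝ] H)
    (hJ : IsCplxStruct J) (g₀ v₀ : H →L[ℝ] H)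
    (hg₀ : g₀ ∈ Sp2 b J) (hv₀ : v₀ ∈ sp2 b J) :
    ∀ t : ℝ, g₀ * NormedSpace.exp (t • star v₀) *
      NormedSpace.exp (t • (v₀ - star v₀)) ∈ Sp2 b J := by
  intro t
  let +nondep : NormedAlgebra ℚ (H →L[ℝ] H) := .restrictScalars ℚ ℝ _
  obtain ⟨⟨hg₀u, hg₀J⟩, hg₀HS⟩ := hg₀
  obtain ⟨hvHS, hvJ⟩ := hv₀
  obtain ⟨hJ2, hJs⟩ := hJ
  set E₁ := NormedSpace.exp (t • star v₀) with hE₁def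
  set E₂ := NormedSpace.exp (t • (v₀ - star v₀)) with hE₂def
  -- J is a unit with inverse -J
  have hJu1 : J * (-J) = 1 := by rw [mul_neg, hJ2, neg_neg]
  have hJu2 : (-J) * J = 1 := by rw [neg_mul, hJ2, neg_neg]
  set u : (H →L[ℝ] H)ˣ := ⟨J, -J, hJu1, hJu2⟩ with hu
  -- basic relations
  have hstar : star v₀ = J * v₀ * J := by
    have h : J * (v₀ * J) = star v₀ := by
      rw [hvJ, mul_neg, ← mul_assoc, hJ2, neg_mul, one_mul, neg_neg]
    rw [← h, mul_assoc]
  have hstarJ : star v₀ * J = -(J * v₀) := by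
    rw [hstar, mul_assoc (J * v₀), hJ2, mul_neg_one]
  -- exp inverses
  have hexpinv : ∀ y : H →L[ℝ] H,
      NormedSpace.exp y * NormedSpace.exp (-y) = 1 := fun y => by
    rw [← NormedSpace.exp_add_of_commute ((Commute.refl y).neg_right), add_neg_cancel,
      NormedSpace.exp_zero]
  have hexpinv' : ∀ y : H →L[ℝ] H,
      NormedSpace.exp (-y) * NormedSpace.exp y = 1 := fun y => by
    rw [← NormedSpace.exp_add_of_commute ((Commute.refl y).neg_left), neg_add_cancel,
      NormedSpace.exp_zero]
  -- E₁ is symplectic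
  have hconj : t • star v₀ = ↑u * (t • (-v₀)) * ↑u⁻¹ := by
    show t • star v₀ = J * (t • (-v₀)) * (-J)
    rw [hstar, mul_smul_comm, smul_mul_assoc]
    congr 1
    simp only [mul_neg, neg_mul, neg_neg]
  have hE1conj : E₁ = J * NormedSpace.exp (t • (-v₀)) * (-J) := by
    have h := NormedSpace.exp_units_conj u (t • (-v₀))
    rw [← hconj] at h
    exact h
  have hstarE1 : star E₁ = NormedSpace.exp (t • v₀) := by
    rw [hE₁def, NormedSpace.star_exp, star_smul, star_star, star_trivial]
  have hE1 : star E₁ * J * E₁ = J := by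
    rw [hstarE1, hE1conj, smul_neg]
    set A := NormedSpace.exp (t • v₀) with hA
    set B := NormedSpace.exp (-(t • v₀)) with hB
    calc A * J * (J * B * -J)
        = A * (J * J * (B * -J)) := by simp only [mul_assoc]
      _ = A * (B * J) := by rw [hJ2, neg_one_mul]; simp only [mul_neg, neg_neg]
      _ = A * B * J := by rw [mul_assoc]
      _ = J := by rw [hA, hB, hexpinv (t • v₀), one_mul]
  -- E₂ is symplectic
  have hwJ : (v₀ - star v₀) * J = J * (v₀ - star v₀) := by
    rw [sub_mul, hvJ, hstarJ, mul_sub]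
    abel
  have hcw : Commute (t • (v₀ - star v₀)) J := by
    show t • (v₀ - star v₀) * J = J * (t • (v₀ - star v₀))
    rw [smul_mul_assoc, mul_smul_comm, hwJ]
  have hE2comm : Commute E₂ J := Commute.exp_left hcw
  have hstarE2 : star E₂ = NormedSpace.exp (-(t • (v₀ - star v₀))) := by
    rw [hE₂def, NormedSpace.star_exp]
    congr 1
    rw [star_smul, star_trivial, star_sub, star_star, ← neg_sub v₀ (star v₀), smul_neg]
  have hE2 : star E₂ * J * E₂ = J := by
    rw [hstarE2, mul_assoc, hE2comm.symm.eq, ← mul_assoc, hE₂def,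
      hexpinv' (t • (v₀ - star v₀)), one_mul]
  -- group part
  have hgJ : star (g₀ * E₁ * E₂) * J * (g₀ * E₁ * E₂) = J :=
    sp_rel_mul (sp_rel_mul hg₀J hE1) hE2
  have hgu : IsUnit (g₀ * E₁ * E₂) :=
    (hg₀u.mul (NormedSpace.isUnit_exp _)).mul (NormedSpace.isUnit_exp _)
  -- Hilbert-Schmidt part
  obtain ⟨c₁, hc₁⟩ := exp_sub_one_factor (t • star v₀)
  obtain ⟨c₂, hc₂⟩ := exp_sub_one_factor (t • (v₀ - star v₀))
  have hx1 : IsHS b (t • star v₀) := IsHS.smul' t (IsHS.star_mem hvHS)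
  have hx2 : IsHS b (t • (v₀ - star v₀)) :=
    IsHS.smul' t (IsHS.sub' hvHS (IsHS.star_mem hvHS))
  have hdecomp : g₀ * E₁ * E₂ - 1
      = (g₀ * E₁ * c₂) * (t • (v₀ - star v₀)) + ((g₀ * c₁) * (t • star v₀) + (g₀ - 1)) := by
    rw [hE₁def, hE₂def, hc₁, hc₂]
    exact decomp_aux ..
  have hHS : IsHS b (g₀ * E₁ * E₂ - 1) := by
    rw [hdecomp]
    exact IsHS.add' (IsHS.mul_left' _ hx2) (IsHS.add' (IsHS.mul_left' _ hx1) hg₀HS)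
  exact ⟨⟨hgu, hgJ⟩, hHS⟩

end
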